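/- Let G be a group, (g₁,…,gₙ) ∈ Gⁿ, c = g₁⋯gₙ, and let σᵢ be the Hurwitz moves. Then the full twist (σ_{n−1}σ_{n−2}⋯σ₁)ⁿ applied to (g₁,…,gₙ) equals (c g₁ c⁻¹, c g₂ c⁻¹, …, c gₙ c⁻¹). -/

import Mathlib

/-- The Hurwitz move `σᵢ`. -/
def hurwitzMove {G : Type*} [Group G] (i : ℕ) (g : ℕ → G) : ℕ → G :=
  fun j => if j = i then g i * g (i + 1) * (g i)⁻¹ else if j = i + 1 then g i else g j

/-- The cycling move `σ_{n−1} σ_{n−2} ⋯ σ₁` (here 0-indexed: `σ_{n-2} ∘ ⋯ ∘ σ₀`,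
with `σ₀` applied first). -/
def cyclingMove {G : Type*} [Group G] (n : ℕ) : (ℕ → G) → (ℕ → G) :=
  (List.range (n - 1)).foldl (fun f i => hurwitzMove i ∘ f) id

lemma partialFold_apply {G : Type*} [Group G] (m : ℕ) (g : ℕ → G) (j : ℕ) :
    ((List.range m).foldl (fun f i => hurwitzMove i ∘ f) id) g j =
      if j < m then g 0 * g (j + 1) * (g 0)⁻¹
      else if j = m ∧ 0 < m then g 0 else g j := by
  induction m generalizing j with
  | zero => simp
  | succ m ih =>
    rw [List.range_succ, List.foldl_append]
    simp only [List.foldl_cons, List.foldl_nil, Function.comp_apply]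
    set h := (List.range m).foldl (fun f i => hurwitzMove i ∘ f) id g with hh
    have ihm := ih m
    have ihm1 := ih (m + 1)
    have ihj := ih j
    rw [hurwitzMove]
    simp only at ihm ihm1 ihj ⊢
    rw [ihm, ihm1, ihj]
    simp only [lt_self_iff_false, eq_self_iff_true, true_and, if_false]
    split_ifs <;>
      first
      | rfl | omega | (group; done)
      | (congr 1 <;>
          first
          | rfl | omega
          | (congr 1 <;> first | rfl | omega | (congr 1 <;> omega)))

lemma cyclingMove_apply {G : Type*} [Group G] (n : ℕ) (g : ℕ → G) (j : ℕ) :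
    cyclingMove n g j =
      if j + 1 < n then g 0 * g (j + 1) * (g 0)⁻¹
      else if j + 1 = n then g 0 else g j := by
  rw [cyclingMove, partialFold_apply]
  split_ifs <;> first | rfl | omega | (congr 1; omega)

lemma iterate_cyclingMove {G : Type*} [Group G] (n : ℕ) (hn : 0 < n) (g : ℕ → G) (k : ℕ) :
    ∀ j < n, ((cyclingMove n)^[k] g) j =
      ((List.range k).map (fun i => g (i % n))).prod * g ((j + k) % n) *
      (((List.range k).map (fun i => g (i % n))).prod)⁻¹ := by
  induction k with
  | zero => intro j hj; simp [Nat.mod_eq_of_lt hj]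
  | succ k ih =>
    intro j hj
    rw [Function.iterate_succ_apply', cyclingMove_apply]
    set P := ((List.range k).map (fun i => g (i % n))).prod with hP
    have hPk : ((List.range (k + 1)).map (fun i => g (i % n))).prod = P * g (k % n) := by
      rw [List.range_succ, List.map_append, List.prod_append]
      simp
      exact hP.symm
    have h0 := ih 0 hn
    simp only [Nat.zero_add] at h0
    by_cases h1 : j + 1 < n
    · rw [if_pos h1, h0, ih (j + 1) h1, hPk]
      have : (j + 1 + k) % n = (j + (k + 1)) % n := by ring_nf
      rw [this]
      group
    · have h2 : j + 1 = n := by omega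
      rw [if_neg h1, if_pos h2, h0, hPk]
      have : (j + (k + 1)) % n = k % n := by
        have : j + (k + 1) = n + k := by omega
        rw [this, Nat.add_mod_left]
      rw [this]
      group

/-- The full twist `(σ_{n−1} ⋯ σ₁)ⁿ` conjugates every entry of the tuple by the
product `c = g₁ ⋯ gₙ`. -/
theorem fullTwist_eq_conj {G : Type*} [Group G] (n : ℕ) (g : ℕ → G)
    (c : G) (hc : c = ((List.range n).map g).prod) :
    ∀ j < n, ((cyclingMove n)^[n] g) j = c * g j * c⁻¹ := by
  intro j hj
  have hn : 0 < n := by omega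
  rw [iterate_cyclingMove n hn g n j hj]
  have hmap : ((List.range n).map (fun i => g (i % n))).prod = ((List.range n).map g).prod := by
    congr 1
    apply List.map_congr_left
    intro i hi
    rw [Nat.mod_eq_of_lt (List.mem_range.mp hi)]
  rw [hmap, ← hc, Nat.add_mod_right, Nat.mod_eq_of_lt hj]
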